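/- arXiv:2511.10359 — 2 statements merged into one kernel-verified Lean document; each statement's English description precedes it below -/
import Mathlib

section
/- Let z ∈ ℂ with |z| > 1, δ > 0, and let p_1 < ⋯ < p_r be integers with p_{i+1} − p_i ≥ δ. Suppose c_1, …, c_r ∈ {−2, 0, 2} are not all zero and Σ_{k=1}^{r} c_k z^{p_k} = 0. Then |z|^δ ≤ 2. -/
theorem stmt_8 (z : ℂ) (hz : 1 < ‖z‖) (δ : ℝ) (hδ : 0 < δ)
    (r : ℕ) (hr : 1 ≤ r) (p : ℕ → ℤ)
    (hspace : ∀ i, 1 ≤ i → i < r → ((p (i + 1) : ℝ) - p i) ≥ δ)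
    (c : ℕ → ℤ) (hc : ∀ k ∈ Finset.Icc 1 r, c k = -2 ∨ c k = 0 ∨ c k = 2)
    (hne : ∃ k ∈ Finset.Icc 1 r, c k ≠ 0)
    (hsum : ∑ k ∈ Finset.Icc 1 r, (c k : ℂ) * z ^ (p k) = 0) :
    (‖z‖) ^ δ ≤ 2 := by
  by_contra hcon
  push_neg at hcon
  set a := ‖z‖ with ha
  have ha1 : (1:ℝ) < a := hz
  have ha0 : (0:ℝ) < a := by linarith
  set t := a ^ δ with ht
  have ht2 : (2:ℝ) < t := hcon
  have ht0 : (0:ℝ) < t := by positivity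
  classical
  -- maximal index with nonzero coefficient
  set S := (Finset.Icc 1 r).filter (fun k => c k ≠ 0) with hS
  have hSne : S.Nonempty := by
    obtain ⟨k, hk, hkne⟩ := hne
    exact ⟨k, Finset.mem_filter.2 ⟨hk, hkne⟩⟩
  set L := S.max' hSne with hLdef
  have hLS : L ∈ S := S.max'_mem hSne
  have hLmem : L ∈ Finset.Icc 1 r := (Finset.mem_filter.1 hLS).1
  have hcL : c L ≠ 0 := (Finset.mem_filter.1 hLS).2
  obtain ⟨hL1, hLr⟩ := Finset.mem_Icc.1 hLmem
  have hzero : ∀ k ∈ Finset.Icc 1 r, k ∉ Finset.Icc 1 L → (c k : ℂ) * z ^ (p k) = 0 := by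
    intro k hk hk'
    obtain ⟨h1, h2⟩ := Finset.mem_Icc.1 hk
    have hLk : L < k := by
      by_contra h
      exact hk' (Finset.mem_Icc.2 ⟨h1, by omega⟩)
    have hck : c k = 0 := by
      by_contra h
      exact absurd (S.le_max' k (Finset.mem_filter.2 ⟨hk, h⟩)) (not_le.2 hLk)
    simp [hck]
  have hsum2 : ∑ k ∈ Finset.Icc 1 L, (c k : ℂ) * z ^ (p k) = 0 :=
    (Finset.sum_subset (Finset.Icc_subset_Icc_right hLr) hzero).trans hsum
  have hsplit : (c L : ℂ) * z ^ (p L) = -∑ k ∈ Finset.Ico 1 L, (c k : ℂ) * z ^ (p k) := by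
    rw [← Finset.Ico_add_one_right_eq_Icc, Finset.sum_Ico_succ_top hL1] at hsum2
    linear_combination hsum2
  -- absolute values
  have habsz : ∀ k : ℕ, ‖z ^ (p k)‖ = a ^ ((p k : ℤ) : ℝ) := by
    intro k
    rw [norm_zpow, Real.rpow_intCast]
  have hcL2 : |(c L : ℝ)| = 2 := by
    rcases hc L hLmem with h | h | h
    · rw [h]; norm_num
    · exact absurd h hcL
    · rw [h]; norm_num
  have hkey : 2 * a ^ ((p L : ℤ) : ℝ) ≤ ∑ k ∈ Finset.Ico 1 L, 2 * a ^ ((p k : ℤ) : ℝ) := by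
    have h1 : ‖(c L : ℂ) * z ^ (p L)‖ = 2 * a ^ ((p L : ℤ) : ℝ) := by
      rw [norm_mul, habsz, Complex.norm_intCast, hcL2]
    calc 2 * a ^ ((p L : ℤ) : ℝ)
        = ‖(c L : ℂ) * z ^ (p L)‖ := h1.symm
      _ = ‖∑ k ∈ Finset.Ico 1 L, (c k : ℂ) * z ^ (p k)‖ := by
          rw [hsplit, norm_neg]
      _ ≤ ∑ k ∈ Finset.Ico 1 L, ‖(c k : ℂ) * z ^ (p k)‖ := by
          exact norm_sum_le _ _
      _ ≤ ∑ k ∈ Finset.Ico 1 L, 2 * a ^ ((p k : ℤ) : ℝ) := by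
          apply Finset.sum_le_sum
          intro k hk
          rw [norm_mul, habsz, Complex.norm_intCast]
          have hkmem : k ∈ Finset.Icc 1 r := by
            obtain ⟨hk1, hk2⟩ := Finset.mem_Ico.1 hk
            exact Finset.mem_Icc.2 ⟨hk1, by omega⟩
          have : |(c k : ℝ)| ≤ 2 := by
            rcases hc k hkmem with h | h | h <;> rw [h] <;> norm_num
          have hpos : (0:ℝ) ≤ a ^ ((p k : ℤ) : ℝ) := Real.rpow_nonneg (le_of_lt ha0) _
          nlinarith
  -- chain of spacing
  have chain : ∀ m k, 1 ≤ k → k + m ≤ r → ((p k : ℝ) + m * δ ≤ (p (k + m) : ℝ)) := by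
    intro m
    induction m with
    | zero => intro k _ _; simp
    | succ n ih =>
      intro k hk1 hkm
      have h1 := ih k hk1 (by omega)
      have h2 := hspace (k + n) (by omega) (by omega)
      have : k + (n + 1) = (k + n) + 1 := by omega
      rw [this]
      push_cast
      push_cast at h1 h2
      linarith
  -- bound each term by geometric
  have hbound : ∀ k ∈ Finset.Ico 1 L,
      a ^ ((p k : ℤ) : ℝ) ≤ a ^ ((p L : ℤ) : ℝ) * (1/t) ^ (L - k) := by
    intro k hk
    obtain ⟨hk1, hk2⟩ := Finset.mem_Ico.1 hk
    have hc1 := chain (L - k) k hk1 (by omega)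
    rw [show k + (L - k) = L by omega] at hc1
    have hrw : a ^ ((p L : ℤ) : ℝ) * (1/t) ^ (L - k)
        = a ^ (((p L : ℤ) : ℝ) - (L - k : ℕ) * δ) := by
      rw [ht, one_div, ← Real.rpow_neg (le_of_lt ha0), ← Real.rpow_natCast (a ^ (-δ)),
        ← Real.rpow_mul (le_of_lt ha0), ← Real.rpow_add ha0]
      congr 1
      ring
    rw [hrw]
    apply Real.rpow_le_rpow_of_exponent_le (le_of_lt ha1)
    have : ((L - k : ℕ) : ℝ) = (L : ℝ) - k := by
      push_cast [Nat.cast_sub (le_of_lt hk2)]; ring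
    linarith [hc1]
  -- geometric sum bound
  have hx0 : (0:ℝ) < 1/t := by positivity
  have hx1 : (1:ℝ)/t < 1/2 := by
    rw [div_lt_div_iff₀ ht0 (by norm_num)]; linarith
  have hgeom : ∑ k ∈ Finset.Ico 1 L, (1/t : ℝ) ^ (L - k) < 1 := by
    have hre : ∑ k ∈ Finset.Ico 1 L, (1/t : ℝ) ^ (L - k)
        = ∑ j ∈ Finset.Ico 1 L, (1/t : ℝ) ^ j := by
      apply Finset.sum_nbij' (fun i => L - i) (fun j => L - j)
      · intro i hi; obtain ⟨h1, h2⟩ := Finset.mem_Ico.1 hi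
        exact Finset.mem_Ico.2 ⟨by omega, by omega⟩
      · intro j hj; obtain ⟨h1, h2⟩ := Finset.mem_Ico.1 hj
        exact Finset.mem_Ico.2 ⟨by omega, by omega⟩
      · intro i hi; obtain ⟨h1, h2⟩ := Finset.mem_Ico.1 hi; omega
      · intro j hj; obtain ⟨h1, h2⟩ := Finset.mem_Ico.1 hj; omega
      · intro i hi; rfl
    rw [hre]
    have hrange : ∑ j ∈ Finset.range L, (1/t : ℝ) ^ j
        = 1 + ∑ j ∈ Finset.Ico 1 L, (1/t : ℝ) ^ j := by
      rw [Finset.range_eq_Ico, ← Finset.sum_Ico_consecutive _ (Nat.zero_le 1) hL1]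
      norm_num
    have hxne : (1/t : ℝ) ≠ 1 := by linarith
    have := geom_sum_eq hxne L
    rw [Finset.range_eq_Ico] at this
    have hpow : (0:ℝ) ≤ (1/t) ^ L := by positivity
    have hgs : ∑ j ∈ Finset.Ico 0 L, (1/t : ℝ) ^ j ≤ 1 / (1 - 1/t) := by
      rw [this, ← neg_div_neg_eq, neg_sub, neg_sub]
      gcongr
      · linarith
      · linarith
    have h2 : (1:ℝ) / (1 - 1/t) < 2 := by
      rw [div_lt_iff₀ (by linarith)]; linarith
    have := hrange
    rw [Finset.range_eq_Ico] at this
    linarith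
  -- combine
  have hAL : (0:ℝ) < a ^ ((p L : ℤ) : ℝ) := Real.rpow_pos_of_pos ha0 _
  have hfinal : ∑ k ∈ Finset.Ico 1 L, 2 * a ^ ((p k : ℤ) : ℝ)
      ≤ 2 * a ^ ((p L : ℤ) : ℝ) * ∑ k ∈ Finset.Ico 1 L, (1/t : ℝ) ^ (L - k) := by
    rw [Finset.mul_sum]
    apply Finset.sum_le_sum
    intro k hk
    have := hbound k hk
    nlinarith
  nlinarith [hkey, hfinal, hgeom, hAL]
end

section
/- Let p be a prime, and let P ∈ ℤ[X] be a polynomial of degree N−1 with leading and constant coefficients ±1. Suppose Q(X) = P(X+1) = Σ_{l=0}^{N−1} g_l X^l satisfies: v_p(g_l) ≥ 1 for all l ≤ N−2, v_p(g_{N−1}) = 0, and there exists j with 1 ≤ j ≤ m such that v_p(g_j) = 1 (where v_p denotes p-adic valuation). Then the Newton polygon of Q over ℚ_p has a segment of slope with denominator at least N−1−j in lowest terms when the segment from (j, 1) to (N−1, 0) has horizontal length N−1−j and height 1 with gcd(1, N−1−j) = 1; consequently Q (and hence P) has an irreducible factor over ℚ_p of degree at least N−1−j. -/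
open Polynomial

variable {p : ℕ} [hp : Fact (Nat.Prime p)]

private lemma toZMod_zero_iff (x : ℤ_[p]) : PadicInt.toZMod x = 0 ↔ (p : ℤ_[p]) ∣ x := by
  have h : x ∈ RingHom.ker (PadicInt.toZMod : ℤ_[p] →+* ZMod p) ↔ PadicInt.toZMod x = 0 :=
    RingHom.mem_ker
  rw [← h, PadicInt.ker_toZMod, PadicInt.maximalIdeal_eq_span_p, Ideal.mem_span_singleton]

/-- Products of monic polynomials congruent to `X^d` mod `p`. -/
private lemma prod_facts (l : List (Polynomial ℤ_[p]))
    (h : ∀ R ∈ l, R.Monic ∧ ∀ k < R.natDegree, (p : ℤ_[p]) ∣ R.coeff k) :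
    l.prod.Monic ∧ l.prod.natDegree = (l.map Polynomial.natDegree).sum ∧
      ∀ k < (l.map Polynomial.natDegree).sum, (p : ℤ_[p]) ∣ l.prod.coeff k := by
  induction l with
  | nil => simp [Polynomial.monic_one]
  | cons R t ih =>
    obtain ⟨hRm, hRc⟩ := h R (List.mem_cons_self)
    obtain ⟨hTm, hTd, hTc⟩ := ih (fun S hS => h S (List.mem_cons_of_mem _ hS))
    rw [List.prod_cons, List.map_cons, List.sum_cons]
    refine ⟨hRm.mul hTm, by rw [hRm.natDegree_mul hTm, hTd], ?_⟩
    intro k hk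
    rw [Polynomial.coeff_mul]
    refine Finset.dvd_sum fun x hx => ?_
    have hab : x.1 + x.2 = k := Finset.HasAntidiagonal.mem_antidiagonal.mp hx
    rcases lt_or_ge x.1 R.natDegree with ha | ha
    · exact (hRc _ ha).mul_right _
    · rcases lt_or_ge R.natDegree x.1 with ha' | ha'
      · rw [Polynomial.coeff_eq_zero_of_natDegree_lt ha', zero_mul]
        exact dvd_zero _
      · have hx1 : x.1 = R.natDegree := le_antisymm ha' ha
        have hb : x.2 < t.prod.natDegree := by rw [hTd]; omega
        exact ((hTc x.2 (hTd ▸ hb)).mul_left _)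

/-- The key combinatorial lemma: if a coefficient of the product is not divisible by `p ^ 2`,
one of the factors must have large degree. -/
private lemma key_factor :
    ∀ l : List (Polynomial ℤ_[p]),
      (∀ R ∈ l, R.Monic ∧ ∀ k < R.natDegree, (p : ℤ_[p]) ∣ R.coeff k) →
      ∀ j, j < (l.map Polynomial.natDegree).sum →
      ¬ ((p : ℤ_[p]) ^ 2 ∣ l.prod.coeff j) →
      ∃ R ∈ l, (l.map Polynomial.natDegree).sum - j ≤ R.natDegree := by
  intro l
  induction l with
  | nil => intro _ j hj _; simp at hj
  | cons R t ih =>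
    intro h j hj hnd
    obtain ⟨hRm, hRc⟩ := h R (List.mem_cons_self)
    have ht := fun S hS => h S (List.mem_cons_of_mem _ hS)
    obtain ⟨hTm, hTd, hTc⟩ := prod_facts t ht
    rw [List.map_cons, List.sum_cons] at hj ⊢
    rw [List.prod_cons, Polynomial.coeff_mul] at hnd
    have hex : ∃ x ∈ Finset.HasAntidiagonal.antidiagonal j,
        ¬ ((p : ℤ_[p]) ^ 2 ∣ R.coeff x.1 * t.prod.coeff x.2) := by
      by_contra hall
      push_neg at hall
      exact hnd (Finset.dvd_sum hall)
    obtain ⟨⟨a, b⟩, hxmem, hx⟩ := hex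
    have hab : a + b = j := Finset.HasAntidiagonal.mem_antidiagonal.mp hxmem
    rcases lt_or_ge a R.natDegree with ha | ha
    · -- `a < deg R`; then necessarily `b ≥ sum of degrees of t`.
      rcases lt_or_ge b ((t.map Polynomial.natDegree).sum) with hb | hb
      · exfalso
        apply hx
        have := mul_dvd_mul (hRc a ha) (hTc b hb)
        rwa [← pow_two] at this
      · exact ⟨R, List.mem_cons_self, by omega⟩
    · rcases lt_or_ge R.natDegree a with ha' | ha'
      · exfalso
        apply hx
        rw [Polynomial.coeff_eq_zero_of_natDegree_lt ha', zero_mul]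
        exact dvd_zero _
      · have hae : a = R.natDegree := le_antisymm ha' ha
        have hb : b < (t.map Polynomial.natDegree).sum := by omega
        have hnd2 : ¬ ((p : ℤ_[p]) ^ 2 ∣ t.prod.coeff b) := by
          intro hdd
          apply hx
          rw [hae, Polynomial.Monic.coeff_natDegree hRm, one_mul]
          exact hdd
        obtain ⟨S, hS, hSle⟩ := ih ht b hb hnd2
        exact ⟨S, List.mem_cons_of_mem _ hS, by omega⟩

/-- Every monic polynomial over `ℤ_[p]` factors as a product of monic polynomials that are
irreducible over `ℚ_[p]`. -/
private lemma exists_factorization :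
    ∀ (n : ℕ) (f : Polynomial ℤ_[p]), f.Monic → f.natDegree = n →
      ∃ l : List (Polynomial ℤ_[p]),
        (∀ R ∈ l, R.Monic ∧ Irreducible (R.map (algebraMap ℤ_[p] ℚ_[p]))) ∧ f = l.prod := by
  intro n
  induction n using Nat.strong_induction_on with
  | _ n ih =>
    intro f hf hdeg
    rcases Nat.eq_zero_or_pos n with h0 | hpos
    · refine ⟨[], by simp, ?_⟩
      rw [List.prod_nil]
      exact hf.natDegree_eq_zero.mp (by omega)
    · have hinj : Function.Injective (algebraMap ℤ_[p] ℚ_[p]) :=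
        IsFractionRing.injective ℤ_[p] ℚ_[p]
      set fm := f.map (algebraMap ℤ_[p] ℚ_[p]) with hfm
      have hfmm : fm.Monic := hf.map _
      have hfmd : fm.natDegree = n := by rw [hfm, hf.natDegree_map, hdeg]
      have hnu : ¬ IsUnit fm := by
        intro hu
        have := Polynomial.natDegree_eq_zero_of_isUnit hu
        omega
      obtain ⟨g, hgi, hgd⟩ := WfDvdMonoid.exists_irreducible_factor hnu hfmm.ne_zero
      obtain ⟨G, hG⟩ := IsIntegrallyClosed.eq_map_mul_C_of_dvd ℚ_[p] hf hgd
      have hc : g.leadingCoeff ≠ 0 := Polynomial.leadingCoeff_ne_zero.mpr hgi.ne_zero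
      have hgl : IsUnit (Polynomial.C g.leadingCoeff) :=
        Polynomial.isUnit_C.mpr (isUnit_iff_ne_zero.mpr hc)
      have hGassoc : Associated (G.map (algebraMap ℤ_[p] ℚ_[p])) g :=
        ⟨hgl.unit, by rw [IsUnit.unit_spec]; exact hG⟩
      have hGirr : Irreducible (G.map (algebraMap ℤ_[p] ℚ_[p])) :=
        hGassoc.symm.irreducible hgi
      have hGdvd : G.map (algebraMap ℤ_[p] ℚ_[p]) ∣ fm := hGassoc.dvd.trans hgd
      have hGmm : (G.map (algebraMap ℤ_[p] ℚ_[p])).Monic := by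
        have h1 := congrArg Polynomial.leadingCoeff hG
        rw [Polynomial.leadingCoeff_mul, Polynomial.leadingCoeff_C] at h1
        have h2 : (G.map (algebraMap ℤ_[p] ℚ_[p])).leadingCoeff * g.leadingCoeff
            = 1 * g.leadingCoeff := by rw [h1, one_mul]
        exact mul_right_cancel₀ hc h2
      have hGm : G.Monic := Polynomial.monic_of_injective hinj hGmm
      obtain ⟨q, hq⟩ := hGdvd
      have hqm : q.Monic := hGmm.of_mul_monic_left (hq ▸ hfmm)
      obtain ⟨H, hH⟩ := IsIntegrallyClosed.eq_map_mul_C_of_dvd ℚ_[p] hf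
        (Dvd.intro_left _ hq.symm)
      rw [hqm.leadingCoeff, Polynomial.C_1, mul_one] at hH
      have hHm : H.Monic := Polynomial.monic_of_injective hinj (hH ▸ hqm)
      have hfGH : f = G * H := by
        apply Polynomial.map_injective _ hinj
        rw [Polynomial.map_mul, hH, ← hq, hfm]
      have hGpos : 0 < G.natDegree := by
        have h1 : 0 < (G.map (algebraMap ℤ_[p] ℚ_[p])).natDegree :=
          Polynomial.natDegree_pos_iff_degree_pos.mpr
            (Polynomial.degree_pos_of_irreducible hGirr)
        rwa [hGm.natDegree_map] at h1
      have hHlt : H.natDegree < n := by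
        have hsum : G.natDegree + H.natDegree = n := by
          rw [← hdeg, hfGH, hGm.natDegree_mul hHm]
        omega
      obtain ⟨l, hl, hlp⟩ := ih H.natDegree hHlt H hHm rfl
      refine ⟨G :: l, ?_, by rw [List.prod_cons, ← hlp, hfGH]⟩
      intro S hS
      rcases List.mem_cons.mp hS with rfl | hS
      · exact ⟨hGm, hGirr⟩
      · exact hl S hS

theorem stmt_16 (p : ℕ) [Fact (Nat.Prime p)] (N m j : ℕ) (hN : 2 ≤ N)
    (hj : 1 ≤ j) (hjm : j ≤ m) (hmN : m ≤ N - 2)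
    (P : Polynomial ℤ) (hdeg : P.natDegree = N - 1)
    (hlead : P.leadingCoeff = 1 ∨ P.leadingCoeff = -1)
    (hconst : P.coeff 0 = 1 ∨ P.coeff 0 = -1)
    (Q : Polynomial ℤ) (hQ : Q = P.comp (Polynomial.X + 1))
    (hval : ∀ l ≤ N - 2, (p : ℤ) ∣ Q.coeff l)
    (htop : ¬ (p : ℤ) ∣ Q.coeff (N - 1))
    (hj1 : (p : ℤ) ∣ Q.coeff j ∧ ¬ ((p : ℤ) ^ 2 ∣ Q.coeff j)) :
    ∃ R : Polynomial ℚ_[p], Irreducible R ∧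
      R ∣ P.map (Int.castRingHom ℚ_[p]) ∧ N - 1 - j ≤ R.natDegree := by
  have hX1 : (Polynomial.X + 1 : Polynomial ℤ).natDegree = 1 := by
    simpa using Polynomial.natDegree_X_add_C (1 : ℤ)
  have hjN : j < N - 1 := by omega
  -- degree and leading coefficient of Q
  have hQdeg : Q.natDegree = N - 1 := by
    rw [hQ, Polynomial.natDegree_comp, hX1, hdeg, mul_one]
  have hQlc : Q.leadingCoeff = P.leadingCoeff := by
    rw [hQ, Polynomial.leadingCoeff_comp (by rw [hX1]; omega)]
    have : (Polynomial.X + 1 : Polynomial ℤ).leadingCoeff = 1 := by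
      simpa using Polynomial.leadingCoeff_X_add_C (1 : ℤ)
    rw [this, one_pow, mul_one]
  have hlcQ : Q.leadingCoeff = 1 ∨ Q.leadingCoeff = -1 := hQlc ▸ hlead
  set φ := Int.castRingHom ℤ_[p] with hφ
  set Qhat := Q.map φ with hQhat
  set u : ℤ_[p] := φ Q.leadingCoeff with hu
  have hu2 : u * u = 1 := by
    rcases hlcQ with h | h <;> simp [hu, h]
  have huunit : IsUnit u := isUnit_iff_exists_inv.mpr ⟨u, hu2⟩
  have hune : u ≠ 0 := huunit.ne_zero
  have hinjφ : Function.Injective φ := fun a b hab => by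
    have : ((a : ℤ) : ℤ_[p]) = ((b : ℤ) : ℤ_[p]) := hab
    exact_mod_cast this
  have hQhatdeg : Qhat.natDegree = N - 1 := by
    rw [hQhat, Polynomial.natDegree_map_eq_of_injective hinjφ, hQdeg]
  set M := Polynomial.C u * Qhat with hM
  have hMdeg : M.natDegree = N - 1 := by
    rw [hM, Polynomial.natDegree_C_mul hune, hQhatdeg]
  have hMc : ∀ k, M.coeff k = u * φ (Q.coeff k) := by
    intro k
    rw [hM, Polynomial.coeff_C_mul, hQhat, Polynomial.coeff_map]
  have hMm : M.Monic := by
    have : M.coeff M.natDegree = 1 := by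
      rw [hMdeg, hMc, ← hQdeg, Polynomial.coeff_natDegree]
      exact hu2
    rwa [Polynomial.Monic, Polynomial.leadingCoeff]
  -- factor M
  obtain ⟨l, hl, hlp⟩ := exists_factorization (N - 1) M hMm hMdeg
  -- M mod p is X^(N-1)
  have hmodM : M.map (PadicInt.toZMod) = Polynomial.X ^ (N - 1) := by
    ext k
    rw [Polynomial.coeff_map, Polynomial.coeff_X_pow]
    rcases lt_trichotomy k (N - 1) with hk | hk | hk
    · rw [if_neg hk.ne]
      apply (toZMod_zero_iff _).mpr
      rw [hMc]
      have h1 : (p : ℤ_[p]) ∣ φ (Q.coeff k) := by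
        have := hval k (by omega)
        have h2 := map_dvd φ this
        simpa using h2
      exact h1.mul_left _
    · rw [if_pos hk]
      have h1 : M.coeff k = M.coeff M.natDegree := by rw [hMdeg, hk]
      rw [h1, Polynomial.coeff_natDegree, hMm.leadingCoeff, map_one]
    · rw [if_neg hk.ne']
      rw [Polynomial.coeff_eq_zero_of_natDegree_lt (by omega), map_zero]
  -- each factor is X^d mod p
  have hfac : ∀ R ∈ l, R.Monic ∧ ∀ k < R.natDegree, (p : ℤ_[p]) ∣ R.coeff k := by
    intro R hR
    obtain ⟨hRm, _⟩ := hl R hR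
    refine ⟨hRm, ?_⟩
    have hdvd : R.map (PadicInt.toZMod) ∣ Polynomial.X ^ (N - 1) := by
      rw [← hmodM, hlp]
      exact Polynomial.map_dvd _ (List.dvd_prod hR)
    obtain ⟨i, _, hassoc⟩ := (dvd_prime_pow Polynomial.prime_X _).mp hdvd
    have heq : R.map (PadicInt.toZMod) = Polynomial.X ^ i :=
      Polynomial.eq_of_monic_of_associated (hRm.map _) (Polynomial.monic_X_pow i) hassoc
    have hi : R.natDegree = i := by
      have h1 := congrArg Polynomial.natDegree heq
      rwa [hRm.natDegree_map, Polynomial.natDegree_X_pow] at h1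
    intro k hk
    have h0 : (R.map (PadicInt.toZMod)).coeff k = 0 := by
      rw [heq, Polynomial.coeff_X_pow, if_neg (by omega)]
    rw [Polynomial.coeff_map] at h0
    exact (toZMod_zero_iff _).mp h0
  obtain ⟨hplm, hpld, hplc⟩ := prod_facts l hfac
  have hsum : (l.map Polynomial.natDegree).sum = N - 1 := by
    rw [← hpld, ← hlp, hMdeg]
  -- the coefficient j of M is not divisible by p^2
  have hnd2 : ¬ ((p : ℤ_[p]) ^ 2 ∣ l.prod.coeff j) := by
    rw [← hlp]
    intro hd
    rw [hMc] at hd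
    have hd2 : (p : ℤ_[p]) ^ 2 ∣ φ (Q.coeff j) := by
      have h3 : φ (Q.coeff j) = u * (u * φ (Q.coeff j)) := by
        rw [← mul_assoc, hu2, one_mul]
      rw [h3]
      exact hd.mul_left _
    have h4 : ((p : ℤ) ^ 2 : ℤ) ∣ Q.coeff j := by
      have h5 : (p : ℤ_[p]) ^ 2 ∣ ((Q.coeff j : ℤ) : ℤ_[p]) := by
        simpa [hφ] using hd2
      have := (PadicInt.pow_p_dvd_int_iff 2 (Q.coeff j)).mp h5
      exact_mod_cast this
    exact hj1.2 h4
  obtain ⟨R, hRl, hRdeg⟩ := key_factor l hfac j (by omega) hnd2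
  obtain ⟨hRm, hRirr⟩ := hl R hRl
  set ψ := algebraMap ℤ_[p] ℚ_[p] with hψ
  set Rq := R.map ψ with hRq
  -- R divides Qhat
  have hRdvdM : R ∣ M := hlp ▸ List.dvd_prod hRl
  have hRdvdQhat : R ∣ Qhat := by
    have h1 : Qhat = Polynomial.C u * M := by
      rw [hM, ← mul_assoc, ← Polynomial.C_mul, hu2, Polynomial.C_1, one_mul]
    rw [h1]
    exact hRdvdM.mul_left _
  have hRqdvd : Rq ∣ Q.map (Int.castRingHom ℚ_[p]) := by
    have h1 : Qhat.map ψ = Q.map (Int.castRingHom ℚ_[p]) := by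
      rw [hQhat, Polynomial.map_map]
      congr 1
    rw [← h1]
    exact Polynomial.map_dvd ψ hRdvdQhat
  -- relating P and Q over ℚ_[p]
  have hPQ : (Q.map (Int.castRingHom ℚ_[p])).comp (Polynomial.X - Polynomial.C 1)
      = P.map (Int.castRingHom ℚ_[p]) := by
    rw [hQ, Polynomial.map_comp, Polynomial.comp_assoc]
    have h1 : ((Polynomial.X + 1 : Polynomial ℤ).map (Int.castRingHom ℚ_[p])).comp
        (Polynomial.X - Polynomial.C 1) = Polynomial.X := by
      simp [Polynomial.add_comp]
    rw [h1, Polynomial.comp_X]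
  refine ⟨Rq.comp (Polynomial.X - Polynomial.C 1), ?_, ?_, ?_⟩
  · have h1 : Rq.comp (Polynomial.X - Polynomial.C 1)
        = (Polynomial.algEquivAevalXAddC (-1 : ℚ_[p])) Rq := by
      rw [Polynomial.algEquivAevalXAddC_apply, ← Polynomial.comp_eq_aeval]
      congr 1
      rw [map_neg, Polynomial.C_1, sub_eq_add_neg]
    rw [h1]
    exact (MulEquiv.irreducible_iff (Polynomial.algEquivAevalXAddC (-1 : ℚ_[p]))).mpr hRirr
  · obtain ⟨c, hc⟩ := hRqdvd
    rw [← hPQ, hc, Polynomial.mul_comp]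
    exact Dvd.intro _ rfl
  · rw [Polynomial.natDegree_comp, Polynomial.natDegree_X_sub_C, mul_one, hRq,
      hRm.natDegree_map]
    omega
end
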